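/- Nondegeneracy of the lifted skew form (MW property of the lift H): Let B : ℝᵐ × ℝᵐ → ℝˡ be an alternating bilinear map, let μ ∈ ℝˡ and λ ∈ ℝ with λ ≠ 0. Define the bilinear form ω_{(μ,λ)} on ℝᵐ × ℝᵐ (pairs (v,ξ) with v ∈ ℝᵐ, ξ ∈ ℝᵐ) by ω_{(μ,λ)}((v,ξ),(v',ξ')) := μ·B(v,v') + λ(ξ'·v − ξ·v'). Then ω_{(μ,λ)} is a nondegenerate skew-symmetric bilinear form on ℝᵐ × ℝᵐ. -/
import Mathlib


open Matrix

lemma B_skew {m l : ℕ} (B : (Fin m → ℝ) →ₗ[ℝ] (Fin m → ℝ) →ₗ[ℝ] (Fin l → ℝ))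
    (hB : ∀ v : Fin m → ℝ, B v v = 0) (v w : Fin m → ℝ) : B v w = - B w v := by
  have h := hB (v + w)
  simp only [map_add, LinearMap.add_apply, hB] at h
  have h2 : B v w + B w v = 0 := by
    linear_combination (norm := module) h
  exact eq_neg_of_add_eq_zero_left h2


/-- **Nondegeneracy of the lifted skew form (MW property of the lift `H`).**
For an alternating bilinear map `B : ℝᵐ × ℝᵐ → ℝˡ`, `μ ∈ ℝˡ` and `λ ≠ 0`, the form
`ω((v,ξ),(v',ξ')) = μ·B(v,v') + λ(ξ'·v − ξ·v')` on `ℝᵐ × ℝᵐ` is a nondegenerate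
skew-symmetric bilinear form. -/
theorem lifted_skew_form_nondegenerate
    (m l : ℕ)
    (B : (Fin m → ℝ) →ₗ[ℝ] (Fin m → ℝ) →ₗ[ℝ] (Fin l → ℝ))
    (hB : ∀ v : Fin m → ℝ, B v v = 0)
    (μ : Fin l → ℝ) (lam : ℝ) (hlam : lam ≠ 0) :
    (∀ p q : (Fin m → ℝ) × (Fin m → ℝ),
        (μ ⬝ᵥ B p.1 q.1 + lam * (q.2 ⬝ᵥ p.1 - p.2 ⬝ᵥ q.1)) =
          -(μ ⬝ᵥ B q.1 p.1 + lam * (p.2 ⬝ᵥ q.1 - q.2 ⬝ᵥ p.1))) ∧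
    (∀ p : (Fin m → ℝ) × (Fin m → ℝ),
        (∀ q : (Fin m → ℝ) × (Fin m → ℝ),
          μ ⬝ᵥ B p.1 q.1 + lam * (q.2 ⬝ᵥ p.1 - p.2 ⬝ᵥ q.1) = 0) → p = 0) := by
  constructor
  · intro p q
    rw [B_skew B hB p.1 q.1]
    simp [dotProduct_neg]
    ring
  · intro p hp
    have hv : p.1 = 0 := by
      funext i
      have h := hp (0, Pi.single i 1)
      simp [hB] at h
      rcases h with h | h
      · exact absurd h hlam
      · simpa [single_dotProduct] using h
    have hξ : p.2 = 0 := by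
      funext i
      have h := hp (Pi.single i 1, 0)
      rw [hv] at h
      simp at h
      rcases h with h | h
      · exact absurd h hlam
      · simpa [dotProduct_single] using h
    exact Prod.ext hv hξ
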